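/- In the Lusztig extension L, writing ψᵣ := Σ_{i∈C}[θᵣ − δ_{iᵣ, iᵣ₊₁}/(yᵣ − yᵣ₊₁)]ε(i), one has ψᵣ²ε(i) = 0 if iᵣ = iᵣ₊₁; = (yᵣ − yᵣ₊₁)ε(i) if iᵣ − iᵣ₊₁ = 1 and e ≠ 2; = (yᵣ₊₁ − yᵣ)ε(i) if iᵣ − iᵣ₊₁ = −1 and e ≠ 2; = −(yᵣ − yᵣ₊₁)²ε(i) if iᵣ − iᵣ₊₁ = 1 and e = 2; and = ε(i) if iᵣ − iᵣ₊₁ ≠ 0, ±1. -/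

import Mathlib

open MvPolynomial

/-- The rational function field `k(X₁,...,Xₙ)`. -/
abbrev RatFn (k : Type*) [Field k] (n : ℕ) := FractionRing (MvPolynomial (Fin n) k)

/-- The variable `Xₛ` viewed inside `k(X₁,...,Xₙ)`. -/
noncomputable def RatFn.Xv (k : Type*) [Field k] (n : ℕ) (s : Fin n) : RatFn k n :=
  algebraMap (MvPolynomial (Fin n) k) (RatFn k n) (X s)

/-- The action of a permutation on `k(X₁,...,Xₙ)` by permuting the variables. -/
noncomputable def RatFn.act (k : Type*) [Field k] (n : ℕ) (σ : Equiv.Perm (Fin n)) :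
    RatFn k n ≃+* RatFn k n :=
  IsFractionRing.ringEquivOfRingEquiv (renameEquiv k σ).toRingEquiv

/-- The Demazure operator `∂(f) = (σ_{a,b}(f) - f)/(X_a - X_b)` on `k(X₁,...,Xₙ)`. -/
noncomputable def RatFn.dem (k : Type*) [Field k] (n : ℕ) (a b : Fin n) (f : RatFn k n) :
    RatFn k n :=
  (RatFn.act k n (Equiv.swap a b) f - f) / (RatFn.Xv k n a - RatFn.Xv k n b)

/-- The residue `d ∈ ℤ/eℤ` interpreted in `k` (where `e = char k`). -/
noncomputable def resCast (k : Type*) [Field k] (n e : ℕ) [CharP k e] (d : ZMod e) :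
    RatFn k n :=
  algebraMap k (RatFn k n) (ZMod.castHom (dvd_refl e) k d)

/-- The Brundan–Kleshchev rational functions `Qᵣ(i) ∈ k(y)` (degenerate case), written in
the variables `y` of the rational function field, for the pair of positions `a = r`,
`b = r+1` and the tuple `i ∈ Iⁿ`, `I = ℤ/eℤ`, `e = char k`. -/
noncomputable def QBK (k : Type*) [Field k] (n e : ℕ) [CharP k e] (a b : Fin n)
    (i : Fin n → ZMod e) : RatFn k n :=
  if i a - i b = 0 then 1 + RatFn.Xv k n b - RatFn.Xv k n a
  else if i a - i b = 1 ∧ e ≠ 2 then 1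
  else if i a - i b = -1 ∧ e ≠ 2 then
    (2 + RatFn.Xv k n b - RatFn.Xv k n a) / (1 + RatFn.Xv k n b - RatFn.Xv k n a) ^ 2
  else if i a - i b = 1 ∧ e = 2 then 1 / (1 + RatFn.Xv k n b - RatFn.Xv k n a)
  else 1 - 1 / (RatFn.Xv k n a - RatFn.Xv k n b + resCast k n e (i a - i b))


private lemma aux_act_Xv (k : Type*) [Field k] (n : ℕ) (σ : Equiv.Perm (Fin n)) (s : Fin n) :
    RatFn.act k n σ (RatFn.Xv k n s) = RatFn.Xv k n (σ s) := by
  unfold RatFn.act RatFn.Xv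
  rw [IsFractionRing.ringEquivOfRingEquiv_algebraMap]
  simp

private lemma aux_sq {A : Type*} [Ring A] (ψ X c E E' : A)
    (hXE : X * E = E' * X)
    (hpsiE : ψ * E = (X - c) * E)
    (hpsiE' : ψ * E' = (X - c) * E')
    (hcX : c * X = -(X * c))
    (hcE : c * E = E * c) :
    ψ * ψ * E = X * X * E + c * c * E := by
  have h1 : ψ * (X * E) = X * (X * E) - c * (X * E) := by
    rw [hXE, ← mul_assoc, hpsiE', mul_assoc, ← hXE, sub_mul]
  have h2 : c * (X * E) = -(X * (c * E)) := by
    rw [← mul_assoc, hcX, neg_mul, mul_assoc]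
  have h3 : ψ * (c * E) = X * (c * E) - c * (c * E) := by
    rw [hcE, ← mul_assoc, hpsiE, mul_assoc, ← hcE, sub_mul]
  calc ψ * ψ * E = ψ * (ψ * E) := by rw [mul_assoc]
    _ = ψ * (X * E) - ψ * (c * E) := by rw [hpsiE, sub_mul, mul_sub]
    _ = (X * (X * E) - -(X * (c * E))) - (X * (c * E) - c * (c * E)) := by
        rw [h1, h2, h3]
    _ = X * X * E + c * c * E := by noncomm_ring

set_option maxHeartbeats 1000000 in
set_option synthInstance.maxHeartbeats 1000000 in
open RatFn in
/-- In the Lusztig extension `L`, with `ψᵣ = Σ_{i∈C}[θᵣ - δ_{iᵣ,iᵣ₊₁}/(yᵣ - yᵣ₊₁)]ε(i)`,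
the square `ψᵣ²ε(i)` is given by the KLR case formula.  The model is any ring containing
`k(y)` (via `j`), orthogonal idempotents `ε(i)`, `i ∈ C`, commuting with `k(y)`, and
elements `θᵣ` satisfying `θᵣε(i) = ε(σᵣ(i))θᵣ`, `fθᵣ = θᵣσᵣ(f)` and the case formula
for `θᵣ²ε(i)`. -/
theorem psi_square (k : Type*) [Field k] (n e : ℕ) [CharP k e]
    (A : Type*) [Ring A] (j : RatFn k n →+* A)
    (C : Finset (Fin n → ZMod e)) (ε : (Fin n → ZMod e) → A) (θ : ℕ → A)
    (horth : ∀ i i', ε i * ε i' = if i = i' then ε i else 0)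
    (hsum : ∑ i ∈ C, ε i = 1)
    (hcomm : ∀ (f : RatFn k n) (i), j f * ε i = ε i * j f)
    (hC : ∀ (r : ℕ) (hr : r + 1 < n), ∀ i ∈ C,
      (fun s => i (Equiv.swap ⟨r, Nat.lt_of_succ_lt hr⟩ ⟨r + 1, hr⟩ s)) ∈ C)
    (hθε : ∀ (r : ℕ) (hr : r + 1 < n) (i : Fin n → ZMod e),
      θ r * ε i = ε (fun s => i (Equiv.swap ⟨r, Nat.lt_of_succ_lt hr⟩ ⟨r + 1, hr⟩ s)) * θ r)
    (hfθ : ∀ (r : ℕ) (hr : r + 1 < n) (f : RatFn k n),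
      j f * θ r = θ r * j (act k n (Equiv.swap ⟨r, Nat.lt_of_succ_lt hr⟩ ⟨r + 1, hr⟩) f))
    (hθ2 : ∀ (r : ℕ) (hr : r + 1 < n), ∀ i ∈ C,
      θ r * θ r * ε i
        = if i ⟨r, Nat.lt_of_succ_lt hr⟩ - i ⟨r + 1, hr⟩ = 0 then
            j (-(1 / (Xv k n ⟨r + 1, hr⟩ - Xv k n ⟨r, Nat.lt_of_succ_lt hr⟩) ^ 2)) * ε i
          else if i ⟨r, Nat.lt_of_succ_lt hr⟩ - i ⟨r + 1, hr⟩ = 1 ∧ e ≠ 2 then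
            j (Xv k n ⟨r, Nat.lt_of_succ_lt hr⟩ - Xv k n ⟨r + 1, hr⟩) * ε i
          else if i ⟨r, Nat.lt_of_succ_lt hr⟩ - i ⟨r + 1, hr⟩ = -1 ∧ e ≠ 2 then
            j (Xv k n ⟨r + 1, hr⟩ - Xv k n ⟨r, Nat.lt_of_succ_lt hr⟩) * ε i
          else if i ⟨r, Nat.lt_of_succ_lt hr⟩ - i ⟨r + 1, hr⟩ = 1 ∧ e = 2 then
            j ((Xv k n ⟨r, Nat.lt_of_succ_lt hr⟩ - Xv k n ⟨r + 1, hr⟩)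
                * (Xv k n ⟨r + 1, hr⟩ - Xv k n ⟨r, Nat.lt_of_succ_lt hr⟩)) * ε i
          else ε i) :
    ∀ (r : ℕ) (hr : r + 1 < n),
      let a : Fin n := ⟨r, Nat.lt_of_succ_lt hr⟩
      let b : Fin n := ⟨r + 1, hr⟩
      let ψ : A := ∑ i ∈ C,
        (θ r - if i a = i b then j (1 / (Xv k n a - Xv k n b)) else 0) * ε i
      ∀ i ∈ C,
        ψ * ψ * ε i
          = if i a - i b = 0 then 0
            else if i a - i b = 1 ∧ e ≠ 2 then j (Xv k n a - Xv k n b) * ε i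
            else if i a - i b = -1 ∧ e ≠ 2 then j (Xv k n b - Xv k n a) * ε i
            else if i a - i b = 1 ∧ e = 2 then -(j ((Xv k n a - Xv k n b) ^ 2)) * ε i
            else ε i := by
  intro r hr a b ψ i hi
  have ha : (⟨r, Nat.lt_of_succ_lt hr⟩ : Fin n) = a := rfl
  have hb : (⟨r + 1, hr⟩ : Fin n) = b := rfl
  have hθε' := hθε r hr
  have hθ2' := hθ2 r hr i hi
  have hfθ' := hfθ r hr
  have hC' := hC r hr
  rw [ha, hb] at hθε' hθ2' hfθ' hC'
  have hσf : act k n (Equiv.swap a b) (1 / (Xv k n a - Xv k n b))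
      = -(1 / (Xv k n a - Xv k n b)) := by
    rw [map_div₀, map_one, map_sub, aux_act_Xv, aux_act_Xv, Equiv.swap_apply_left,
      Equiv.swap_apply_right,
      show Xv k n b - Xv k n a = -(Xv k n a - Xv k n b) by ring, one_div, inv_neg, one_div]
  have hψ : ∀ i₀ ∈ C, ψ * ε i₀
      = (θ r - if i₀ a = i₀ b then j (1 / (Xv k n a - Xv k n b)) else 0) * ε i₀ := by
    intro i₀ hi₀
    have hψdef : ψ = ∑ i₁ ∈ C,
        (θ r - if i₁ a = i₁ b then j (1 / (Xv k n a - Xv k n b)) else 0) * ε i₁ := rfl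
    rw [hψdef, Finset.sum_mul, Finset.sum_eq_single i₀]
    · rw [mul_assoc, horth, if_pos rfl]
    · intro x _ hne
      rw [mul_assoc, horth, if_neg hne, mul_zero]
    · exact fun h => absurd hi₀ h
  have hpsiE' : ψ * ε (fun s => i (Equiv.swap a b s))
      = (θ r - if i a = i b then j (1 / (Xv k n a - Xv k n b)) else 0)
        * ε (fun s => i (Equiv.swap a b s)) := by
    rw [hψ _ (hC' i hi)]
    simp only [Equiv.swap_apply_left, Equiv.swap_apply_right]
    by_cases h : i a = i b
    · rw [if_pos h.symm, if_pos h]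
    · rw [if_neg (fun h' => h h'.symm), if_neg h]
  have hcX : (if i a = i b then j (1 / (Xv k n a - Xv k n b)) else 0) * θ r
      = -(θ r * (if i a = i b then j (1 / (Xv k n a - Xv k n b)) else 0)) := by
    split_ifs with h
    · rw [hfθ' (1 / (Xv k n a - Xv k n b)), hσf, map_neg, mul_neg]
    · rw [zero_mul, mul_zero, neg_zero]
  have hcE : (if i a = i b then j (1 / (Xv k n a - Xv k n b)) else 0) * ε i
      = ε i * (if i a = i b then j (1 / (Xv k n a - Xv k n b)) else 0) := by
    split_ifs with h
    · exact hcomm _ i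
    · rw [zero_mul, mul_zero]
  have key := aux_sq ψ (θ r) (if i a = i b then j (1 / (Xv k n a - Xv k n b)) else 0)
    (ε i) (ε (fun s => i (Equiv.swap a b s))) (hθε' i) (hψ i hi) hpsiE' hcX hcE
  by_cases hcond : i a = i b
  · have hsub : i a - i b = 0 := sub_eq_zero_of_eq hcond
    rw [if_pos hcond] at key
    rw [key, hθ2', if_pos hsub, ← map_mul, ← add_mul, ← map_add,
      show (-(1 / (Xv k n b - Xv k n a) ^ 2)
          + (1 / (Xv k n a - Xv k n b)) * (1 / (Xv k n a - Xv k n b))) = 0 by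
        rw [show Xv k n b - Xv k n a = -(Xv k n a - Xv k n b) by ring, neg_sq,
          one_div_mul_one_div, ← sq, neg_add_cancel],
      map_zero, zero_mul, if_pos hsub]
  · have hsub : i a - i b ≠ 0 := sub_ne_zero_of_ne hcond
    rw [if_neg hcond, zero_mul, zero_mul, add_zero] at key
    rw [key, hθ2', if_neg hsub, if_neg hsub]
    split_ifs with h1 h2 h3
    · rfl
    · rfl
    · rw [show (Xv k n a - Xv k n b) * (Xv k n b - Xv k n a)
          = -((Xv k n a - Xv k n b) ^ 2) by ring, map_neg, neg_mul]
    · rfl
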